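/- arXiv:2510.08239 — 2 statements merged into one kernel-verified Lean document; each statement's English description precedes it below -/
import Mathlib

section
/- Let ρ be any density matrix on ℂ^m ⊗ ℂ^n, and let A₁, A₂ be dichotomic observables on ℂ^m and B₁, B₂ dichotomic observables on ℂ^n. Then |Tr(ρ C)| ≤ 2√2, where C = A₁⊗B₁ + A₁⊗B₂ + A₂⊗B₁ − A₂⊗B₂. This is the Tsirelson bound on the CHSH expectation value. -/
open Matrix Kronecker
open scoped ComplexOrder

noncomputable section

/-- A density matrix: positive semidefinite with unit trace. -/
def IsDensityMatrix {d : Type*} [Fintype d] [DecidableEq d] (ρ : Matrix d d ℂ) : Prop :=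
  ρ.PosSemidef ∧ ρ.trace = 1

/-- A dichotomic observable: a Hermitian matrix squaring to the identity. -/
def IsDichotomic {d : Type*} [Fintype d] [DecidableEq d] (A : Matrix d d ℂ) : Prop :=
  A.IsHermitian ∧ A * A = 1

lemma psd_trace_nonneg' {d : Type*} [Fintype d] [DecidableEq d] {A : Matrix d d ℂ}
    (h : A.PosSemidef) : 0 ≤ A.trace := by
  rw [Matrix.trace]
  apply Finset.sum_nonneg
  intro i _
  exact h.diag_nonneg

open scoped MatrixOrder in
lemma psd_trace_mul_nonneg' {d : Type*} [Fintype d] [DecidableEq d] {P Q : Matrix d d ℂ}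
    (hP : P.PosSemidef) (hQ : Q.PosSemidef) : 0 ≤ (P * Q).trace := by
  have h1 : P = CFC.sqrt P * CFC.sqrt P := (CFC.sqrt_mul_sqrt_self P hP.nonneg).symm
  rw [h1, Matrix.mul_assoc, Matrix.trace_mul_comm]
  have h2 : CFC.sqrt P * Q * CFC.sqrt P = (CFC.sqrt P)ᴴ * Q * CFC.sqrt P := by
    rw [(CFC.sqrt_nonneg P).posSemidef.1.eq]
  rw [h2]
  exact psd_trace_nonneg' (hQ.conjTranspose_mul_mul_same _)

lemma sub_kronecker' {l p q r : ℕ} (A B : Matrix (Fin l) (Fin p) ℂ) (C : Matrix (Fin q) (Fin r) ℂ) :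
    (A - B) ⊗ₖ C = A ⊗ₖ C - B ⊗ₖ C := by
  ext ⟨i,j⟩ ⟨k,l⟩; simp [Matrix.kroneckerMap_apply, sub_mul]

lemma kronecker_sub' {l p q r : ℕ} (A : Matrix (Fin l) (Fin p) ℂ) (B C : Matrix (Fin q) (Fin r) ℂ) :
    A ⊗ₖ (B - C) = A ⊗ₖ B - A ⊗ₖ C := by
  ext ⟨i,j⟩ ⟨k,l⟩; simp [Matrix.kroneckerMap_apply, mul_sub]

lemma kronecker_neg' {l p q r : ℕ} (A : Matrix (Fin l) (Fin p) ℂ) (B : Matrix (Fin q) (Fin r) ℂ) :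
    A ⊗ₖ (-B) = -(A ⊗ₖ B) := by
  ext ⟨i,j⟩ ⟨k,l⟩; simp [Matrix.kroneckerMap_apply]

lemma kronecker_conjTranspose' {l p q r : ℕ} (A : Matrix (Fin l) (Fin p) ℂ)
    (B : Matrix (Fin q) (Fin r) ℂ) : (A ⊗ₖ B)ᴴ = Aᴴ ⊗ₖ Bᴴ := by
  ext ⟨i,j⟩ ⟨k,l⟩
  simp [Matrix.kroneckerMap_apply, Matrix.conjTranspose_apply]

lemma chsh_psd {m n : ℕ}
    (A₁ A₂ : Matrix (Fin m) (Fin m) ℂ) (B₁ B₂ : Matrix (Fin n) (Fin n) ℂ)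
    (hA₁ : IsDichotomic A₁) (hA₂ : IsDichotomic A₂)
    (hB₁ : IsDichotomic B₁) (hB₂ : IsDichotomic B₂) :
    ((8 : ℂ) • (1 : Matrix (Fin m × Fin n) (Fin m × Fin n) ℂ) -
      (2 * ((Real.sqrt 2 : ℝ) : ℂ)) •
        (A₁ ⊗ₖ B₁ + A₁ ⊗ₖ B₂ + A₂ ⊗ₖ B₁ - A₂ ⊗ₖ B₂)).PosSemidef := by
  set c : ℂ := ((Real.sqrt 2 : ℝ) : ℂ) with hc_def
  set T : Matrix (Fin m × Fin n) (Fin m × Fin n) ℂ :=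
    (A₁ + A₂) ⊗ₖ (1 : Matrix (Fin n) (Fin n) ℂ) -
      c • ((1 : Matrix (Fin m) (Fin m) ℂ) ⊗ₖ B₁) with hT_def
  set S : Matrix (Fin m × Fin n) (Fin m × Fin n) ℂ :=
    (A₁ - A₂) ⊗ₖ (1 : Matrix (Fin n) (Fin n) ℂ) -
      c • ((1 : Matrix (Fin m) (Fin m) ℂ) ⊗ₖ B₂) with hS_def
  have key : T * T + S * S =
      (8 : ℂ) • (1 : Matrix (Fin m × Fin n) (Fin m × Fin n) ℂ) -
        (2 * c) • (A₁ ⊗ₖ B₁ + A₁ ⊗ₖ B₂ + A₂ ⊗ₖ B₁ - A₂ ⊗ₖ B₂) := by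
    have hc : c * c = 2 := by
      rw [hc_def, ← Complex.ofReal_mul, Real.mul_self_sqrt (by norm_num)]
      norm_num
    rw [hT_def, hS_def]
    simp only [sub_mul, mul_sub, add_mul, mul_add, smul_mul_assoc, mul_smul_comm, smul_smul,
      ← Matrix.mul_kronecker_mul, hA₁.2, hA₂.2, hB₁.2, hB₂.2, Matrix.one_mul, Matrix.mul_one, hc,
      sub_kronecker', Matrix.add_kronecker, kronecker_sub', Matrix.kronecker_add,
      Matrix.one_kronecker_one, smul_sub, smul_add]
    module
  have hstar : star c = c := by rw [hc_def, Complex.star_def, Complex.conj_ofReal]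
  have hT : T.IsHermitian := by
    simp only [Matrix.IsHermitian, hT_def, Matrix.conjTranspose_sub, Matrix.conjTranspose_smul,
      kronecker_conjTranspose', Matrix.conjTranspose_add,
      Matrix.conjTranspose_one, hA₁.1.eq, hA₂.1.eq, hB₁.1.eq, hstar]
  have hS : S.IsHermitian := by
    simp only [Matrix.IsHermitian, hS_def, Matrix.conjTranspose_sub, Matrix.conjTranspose_smul,
      kronecker_conjTranspose', Matrix.conjTranspose_one, hA₁.1.eq, hA₂.1.eq, hB₂.1.eq, hstar]
  rw [← key]
  have h1 := Matrix.posSemidef_conjTranspose_mul_self T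
  have h2 := Matrix.posSemidef_conjTranspose_mul_self S
  rw [hT.eq] at h1
  rw [hS.eq] at h2
  exact h1.add h2

/-- Tsirelson's bound: for any density matrix `ρ` on `ℂ^m ⊗ ℂ^n` and dichotomic
observables `A₁, A₂` on `ℂ^m`, `B₁, B₂` on `ℂ^n`, the CHSH expectation value
satisfies `|Tr(ρ C)| ≤ 2√2`. -/
theorem tsirelson_bound {m n : ℕ}
    (ρ : Matrix (Fin m × Fin n) (Fin m × Fin n) ℂ) (hρ : IsDensityMatrix ρ)
    (A₁ A₂ : Matrix (Fin m) (Fin m) ℂ) (B₁ B₂ : Matrix (Fin n) (Fin n) ℂ)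
    (hA₁ : IsDichotomic A₁) (hA₂ : IsDichotomic A₂)
    (hB₁ : IsDichotomic B₁) (hB₂ : IsDichotomic B₂) :
    ‖(ρ * (A₁ ⊗ₖ B₁ + A₁ ⊗ₖ B₂ + A₂ ⊗ₖ B₁ - A₂ ⊗ₖ B₂)).trace‖ ≤
      2 * Real.sqrt 2 := by
  set c : ℂ := ((Real.sqrt 2 : ℝ) : ℂ) with hc_def
  set C : Matrix (Fin m × Fin n) (Fin m × Fin n) ℂ :=
    A₁ ⊗ₖ B₁ + A₁ ⊗ₖ B₂ + A₂ ⊗ₖ B₁ - A₂ ⊗ₖ B₂ with hC_def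
  set t : ℂ := (ρ * C).trace with ht_def
  have hpsd1 : ((8 : ℂ) • (1 : Matrix (Fin m × Fin n) (Fin m × Fin n) ℂ) -
      (2 * c) • C).PosSemidef := chsh_psd A₁ A₂ B₁ B₂ hA₁ hA₂ hB₁ hB₂
  have hB₁' : IsDichotomic (-B₁) := ⟨hB₁.1.neg, by rw [neg_mul_neg, hB₁.2]⟩
  have hB₂' : IsDichotomic (-B₂) := ⟨hB₂.1.neg, by rw [neg_mul_neg, hB₂.2]⟩
  have hpsd2 : ((8 : ℂ) • (1 : Matrix (Fin m × Fin n) (Fin m × Fin n) ℂ) +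
      (2 * c) • C).PosSemidef := by
    have := chsh_psd A₁ A₂ (-B₁) (-B₂) hA₁ hA₂ hB₁' hB₂'
    simp only [kronecker_neg'] at this
    have hneg : -(A₁ ⊗ₖ B₁) + -(A₁ ⊗ₖ B₂) + -(A₂ ⊗ₖ B₁) - -(A₂ ⊗ₖ B₂) = -C := by
      rw [hC_def]; abel
    rwa [hneg, smul_neg, sub_neg_eq_add] at this
  have h1 : (0 : ℂ) ≤ 8 - (2 * c) * t := by
    have := psd_trace_mul_nonneg' hρ.1 hpsd1
    rwa [Matrix.mul_sub, Matrix.mul_smul, Matrix.mul_smul, Matrix.trace_sub, Matrix.trace_smul,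
      Matrix.trace_smul, Matrix.mul_one, hρ.2, smul_eq_mul, smul_eq_mul, mul_one, ← ht_def]
      at this
  have h2 : (0 : ℂ) ≤ 8 + (2 * c) * t := by
    have := psd_trace_mul_nonneg' hρ.1 hpsd2
    rwa [Matrix.mul_add, Matrix.mul_smul, Matrix.mul_smul, Matrix.trace_add, Matrix.trace_smul,
      Matrix.trace_smul, Matrix.mul_one, hρ.2, smul_eq_mul, smul_eq_mul, mul_one, ← ht_def]
      at this
  have hct : (2 * c) * t = ((2 * Real.sqrt 2 : ℝ) : ℂ) * t := by
    rw [hc_def]; push_cast; ring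
  rw [hct] at h1 h2
  rw [Complex.le_def] at h1 h2
  have hs2 : (0:ℝ) < Real.sqrt 2 := Real.sqrt_pos.mpr (by norm_num)
  have hsq : Real.sqrt 2 * Real.sqrt 2 = 2 := Real.mul_self_sqrt (by norm_num)
  have him : t.im = 0 := by
    have h := h1.2
    simp only [Complex.zero_im, Complex.sub_im, Complex.mul_im, Complex.ofReal_im,
      Complex.ofReal_re, Complex.im_ofNat, zero_mul, mul_zero, add_zero, zero_add] at h
    nlinarith [h]
  have hre1 : 2 * Real.sqrt 2 * t.re ≤ 8 := by
    have h := h1.1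
    simp only [Complex.zero_re, Complex.sub_re, Complex.mul_re, Complex.ofReal_im,
      Complex.ofReal_re, Complex.re_ofNat, zero_mul, mul_zero, sub_zero, him] at h
    linarith [h]
  have hre2 : -8 ≤ 2 * Real.sqrt 2 * t.re := by
    have h := h2.1
    simp only [Complex.zero_re, Complex.add_re, Complex.mul_re, Complex.ofReal_im,
      Complex.ofReal_re, Complex.re_ofNat, zero_mul, mul_zero, sub_zero, him] at h
    linarith [h]
  have habs : ‖t‖ = |t.re| := by
    have : t = ((t.re : ℝ) : ℂ) := Complex.ext rfl (by simp [him])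
    rw [this, Complex.norm_real]
    simp
  rw [habs]
  rcases abs_cases t.re with ⟨h, _⟩ | ⟨h, _⟩ <;> rw [h] <;> nlinarith
end
end

section
/- For every p with 1/3 < p ≤ 1, the two-qubit Werner state ρ_p = p·|Ψ⁻⟩⟨Ψ⁻| + ((1−p)/4)·I₄ has a partial transpose over the second factor that is not positive semidefinite; consequently ρ_p is not separable. -/
open Matrix Kronecker
open scoped ComplexOrder

noncomputable section

/-- A density matrix on `ℂ^m ⊗ ℂ^n` is separable if it is a finite convex combination
of Kronecker products of density matrices on the factors. -/
def IsSepState {m n : ℕ} (ρ : Matrix (Fin m × Fin n) (Fin m × Fin n) ℂ) : Prop :=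
  ∃ (k : ℕ) (p : Fin k → ℝ) (σ : Fin k → Matrix (Fin m) (Fin m) ℂ)
    (τ : Fin k → Matrix (Fin n) (Fin n) ℂ),
    (∀ i, 0 ≤ p i) ∧ (∑ i, p i = 1) ∧
    (∀ i, IsDensityMatrix (σ i)) ∧ (∀ i, IsDensityMatrix (τ i)) ∧
    ρ = ∑ i, ((p i : ℂ)) • ((σ i) ⊗ₖ (τ i))

/-- Partial transpose over the second tensor factor:
`(M^{T_B})_{(i,j),(i',j')} = M_{(i,j'),(i',j)}`. -/
def ptransposeB {m n : ℕ} (M : Matrix (Fin m × Fin n) (Fin m × Fin n) ℂ) :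
    Matrix (Fin m × Fin n) (Fin m × Fin n) ℂ :=
  Matrix.of fun p q => M (p.1, q.2) (q.1, p.2)

/-- The singlet state `|Ψ⁻⟩ = (|01⟩ − |10⟩)/√2` in `ℂ² ⊗ ℂ²`. -/
def psiMinus : Fin 2 × Fin 2 → ℂ :=
  fun p => if p = (0, 1) then ((Real.sqrt 2)⁻¹ : ℝ) else
           if p = (1, 0) then -(((Real.sqrt 2)⁻¹ : ℝ) : ℂ) else 0

/-- The two-qubit Werner state `ρ_p = p·|Ψ⁻⟩⟨Ψ⁻| + ((1−p)/4)·I₄`. -/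
def wernerState (p : ℝ) : Matrix (Fin 2 × Fin 2) (Fin 2 × Fin 2) ℂ :=
  (p : ℂ) • Matrix.vecMulVec psiMinus (star psiMinus) +
    (((1 - p) / 4 : ℝ) : ℂ) • 1

lemma kron_conjTranspose' {m n : ℕ} (A : Matrix (Fin m) (Fin m) ℂ) (B : Matrix (Fin n) (Fin n) ℂ) :
    (A ⊗ₖ B)ᴴ = Aᴴ ⊗ₖ Bᴴ := by
  ext ⟨i,j⟩ ⟨i',j'⟩
  simp [conjTranspose_apply, kroneckerMap_apply, mul_comm]

lemma kron_posSemidef' {m n : ℕ} {A : Matrix (Fin m) (Fin m) ℂ} {B : Matrix (Fin n) (Fin n) ℂ}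
    (hA : A.PosSemidef) (hB : B.PosSemidef) : (A ⊗ₖ B).PosSemidef := by
  exact hA.kronecker hB

lemma smul_posSemidef' {d : Type*} [Fintype d] {M : Matrix d d ℂ} (hM : M.PosSemidef)
    {c : ℝ} (hc : 0 ≤ c) : ((c : ℂ) • M).PosSemidef := by
  rw [Matrix.posSemidef_iff_dotProduct_mulVec]
  constructor
  · unfold Matrix.IsHermitian
    rw [Matrix.conjTranspose_smul, hM.1.eq]
    norm_num
  · intro x
    rw [Matrix.smul_mulVec, dotProduct_smul, smul_eq_mul]
    exact mul_nonneg (by exact_mod_cast Complex.zero_le_real.mpr hc) (hM.dotProduct_mulVec_nonneg x)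

lemma add_posSemidef' {d : Type*} [Fintype d] {M N : Matrix d d ℂ}
    (hM : M.PosSemidef) (hN : N.PosSemidef) : (M + N).PosSemidef := by
  rw [Matrix.posSemidef_iff_dotProduct_mulVec]
  constructor
  · exact hM.1.add hN.1
  · intro x
    rw [Matrix.add_mulVec, dotProduct_add]
    exact add_nonneg (hM.dotProduct_mulVec_nonneg x) (hN.dotProduct_mulVec_nonneg x)

lemma sum_posSemidef' {d : Type*} [Fintype d] {k : ℕ} {f : Fin k → Matrix d d ℂ}
    (h : ∀ i, (f i).PosSemidef) : (∑ i, f i).PosSemidef := by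
  classical
  refine Finset.sum_induction f _ (fun a b ha hb => add_posSemidef' ha hb) ?_ (fun i _ => h i)
  exact Matrix.PosSemidef.zero

lemma ptransposeB_sum_smul_kron {m n k : ℕ} (c : Fin k → ℂ)
    (σ : Fin k → Matrix (Fin m) (Fin m) ℂ) (τ : Fin k → Matrix (Fin n) (Fin n) ℂ) :
    ptransposeB (∑ i, c i • (σ i ⊗ₖ τ i)) = ∑ i, c i • (σ i ⊗ₖ (τ i)ᵀ) := by
  ext ⟨i,j⟩ ⟨i',j'⟩
  simp [ptransposeB, Matrix.sum_apply, Matrix.smul_apply, kroneckerMap_apply,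
    Matrix.transpose_apply]

/-- For `1/3 < p ≤ 1`, the Werner state `ρ_p` has non-positive-semidefinite partial
transpose, and consequently is not separable. -/
theorem werner_npt_and_entangled (p : ℝ) (hp₁ : 1 / 3 < p) (hp₂ : p ≤ 1) :
    ¬ (ptransposeB (wernerState p)).PosSemidef ∧ ¬ IsSepState (wernerState p) := by
  have hNPT : ¬ (ptransposeB (wernerState p)).PosSemidef := by
    intro h
    set v : Fin 2 × Fin 2 → ℂ := fun q => if q = (0,0) then 1 else if q = (1,1) then 1 else 0
      with hv
    have hq := h.dotProduct_mulVec_nonneg v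
    have hs : ((Real.sqrt 2 : ℝ) : ℂ)⁻¹ ^ 2 = 1/2 := by
      rw [← Complex.ofReal_inv, ← Complex.ofReal_pow]
      norm_num [Real.sq_sqrt]
    have key : star v ⬝ᵥ ((ptransposeB (wernerState p)) *ᵥ v)
        = (((1 - p) / 2 - p : ℝ) : ℂ) := by
      simp only [dotProduct, Matrix.mulVec, Fintype.sum_prod_type, Fin.sum_univ_two,
        ptransposeB, wernerState, psiMinus, Matrix.vecMulVec_apply, Matrix.one_apply,
        Matrix.add_apply, Matrix.smul_apply, Matrix.of_apply, Pi.star_apply, hv,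
        Prod.mk.injEq]
      norm_num [Fin.ext_iff, map_inv₀]
      push_cast
      ring_nf
      rw [hs]
      ring
    rw [key] at hq
    have := Complex.zero_le_real.mp hq
    linarith
  refine ⟨hNPT, ?_⟩
  intro ⟨k, q, σ, τ, hq0, _, hσ, hτ, hρ⟩
  apply hNPT
  rw [hρ, ptransposeB_sum_smul_kron]
  exact sum_posSemidef' fun i =>
    smul_posSemidef' (kron_posSemidef' (hσ i).1 ((hτ i).1.transpose)) (hq0 i)
end
end
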